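/- Let n ≥ 4 and 1 ≤ l ≤ n/2 − 1, let u₀ ∈ L^{1,1}(ℝⁿ) ∩ Y^{l+1} and u₁ ∈ L^{1,1}(ℝⁿ) ∩ Y^{l}, and let v be a Fourier-space solution of the plate equation with data (u₀, u₁). Then there exist constants C > 0 and T ≥ 1, with C depending only on n, such that for all t ≥ T: (∫_{ℝⁿ} |v(t,ξ)|² dξ)^{1/2} ≤ C·I_{0,l}·t^{-(l+1)/2}. -/

import Mathlib

open MeasureTheory Real

noncomputable section

def mlog {n : ℕ} (ξ : EuclideanSpace ℝ (Fin n)) : ℝ := Real.log (1 + ‖ξ‖ ^ 2)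

def rho {n : ℕ} (ξ : EuclideanSpace ℝ (Fin n)) : ℝ :=
  min (min ((1/2) * mlog ξ * (1 + mlog ξ)) (1 / (2 * (1 + mlog ξ))))
    ((1/2) * Real.sqrt (mlog ξ))

def ft {n : ℕ} (f : EuclideanSpace ℝ (Fin n) → ℂ) (ξ : EuclideanSpace ℝ (Fin n)) : ℂ :=
  ∫ x, Complex.exp (-Complex.I * ((inner ℝ x ξ : ℝ) : ℂ)) * f x

def normL1 {n : ℕ} (f : EuclideanSpace ℝ (Fin n) → ℂ) : ℝ := ∫ x, ‖f x‖

def norm11 {n : ℕ} (f : EuclideanSpace ℝ (Fin n) → ℂ) : ℝ :=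
  ∫ x, (1 + ‖x‖) * ‖f x‖

def MemL11 {n : ℕ} (f : EuclideanSpace ℝ (Fin n) → ℂ) : Prop :=
  Integrable f ∧ Integrable (fun x => (1 + ‖x‖) * ‖f x‖)

def Ysq {n : ℕ} (f : EuclideanSpace ℝ (Fin n) → ℂ) (δ : ℝ) : ℝ :=
  ∫ ξ, (1 + mlog ξ) ^ δ * ‖ft f ξ‖ ^ 2

def MemY {n : ℕ} (f : EuclideanSpace ℝ (Fin n) → ℂ) (δ : ℝ) : Prop :=
  Integrable (fun ξ => (1 + mlog ξ) ^ δ * ‖ft f ξ‖ ^ 2)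

def IsFourierSol {n : ℕ} (u₀ u₁ : EuclideanSpace ℝ (Fin n) → ℂ)
    (v : ℝ → EuclideanSpace ℝ (Fin n) → ℂ) : Prop :=
  Measurable (Function.uncurry v) ∧
  ∀ ξ, ContDiff ℝ 2 (fun t => v t ξ) ∧
    (∀ t > (0:ℝ), ((1 + mlog ξ : ℝ) : ℂ) * deriv (deriv (fun s => v s ξ)) t
        + ((mlog ξ * (1 + mlog ξ) : ℝ) : ℂ) * v t ξ + deriv (fun s => v s ξ) t = 0) ∧
    v 0 ξ = ft u₀ ξ ∧ deriv (fun s => v s ξ) 0 = ft u₁ ξ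

def PP {n : ℕ} (u₀ u₁ : EuclideanSpace ℝ (Fin n) → ℂ) : ℂ := (∫ x, u₀ x) + ∫ x, u₁ x

def prof1 {n : ℕ} (u₀ u₁ : EuclideanSpace ℝ (Fin n) → ℂ) (t : ℝ)
    (ξ : EuclideanSpace ℝ (Fin n)) : ℂ :=
  PP u₀ u₁ * ((Real.exp (-(t * (mlog ξ * (1 + mlog ξ)))) : ℝ) : ℂ)

def prof2 {n : ℕ} (u₀ u₁ : EuclideanSpace ℝ (Fin n) → ℂ) (t : ℝ)
    (ξ : EuclideanSpace ℝ (Fin n)) : ℂ :=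
  ((Real.exp (-(t / (2 * mlog ξ))) : ℝ) : ℂ) *
    (((Real.sin (Real.sqrt (mlog ξ) * t) / Real.sqrt (mlog ξ) : ℝ) : ℂ) * ft u₁ ξ
      + ((Real.cos (Real.sqrt (mlog ξ) * t) : ℝ) : ℂ) * ft u₀ ξ)

def I0 {n : ℕ} (u₀ u₁ : EuclideanSpace ℝ (Fin n) → ℂ) (l : ℝ) : ℝ :=
  Real.sqrt (norm11 u₀ ^ 2 + norm11 u₁ ^ 2 + Ysq u₀ (l + 1) + Ysq u₁ l)

-- first-order reduction lemma
lemma first_order_red {M p q : ℝ} (hM : 0 < M) {x : ℝ → ℝ}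
    (hx : ContDiff ℝ 2 x)
    (hode : ∀ t ≥ (0:ℝ), (1+M) * deriv (deriv x) t + M*(1+M) * x t + deriv x t = 0)
    (hsum : p + q = -(1/(1+M))) (hprod : p * q = M) :
    ∀ t ≥ (0:ℝ), deriv x t - q * x t = (deriv x 0 - q * x 0) * Real.exp (p * t) := by
  have h1M : (0:ℝ) < 1 + M := by linarith
  have hdiff : Differentiable ℝ x ∧ ContDiff ℝ 1 (deriv x) := by
    have := (contDiff_succ_iff_deriv (n := 1)).mp (by exact_mod_cast hx)
    exact ⟨this.1, this.2.2⟩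
  have hx1 : Differentiable ℝ x := hdiff.1
  have hx2 : Differentiable ℝ (deriv x) := hdiff.2.differentiable one_ne_zero
  have hq : q = -(1/(1+M)) - p := by linarith
  have hMp : M*(1+M) + p + (1+M)*p^2 = 0 := by
    have h2 := hprod
    rw [hq] at h2
    field_simp at h2
    nlinarith [h2]
  set h : ℝ → ℝ := fun t => Real.exp (-(p*t)) * (deriv x t - q * x t) with hh
  have hder : ∀ t, HasDerivAt h
      (Real.exp (-(p*t)) * ((deriv (deriv x) t - q * deriv x t) - p * (deriv x t - q * x t))) t := by
    intro t
    have h1 : HasDerivAt (fun t => Real.exp (-(p*t))) (Real.exp (-(p*t)) * (-p)) t := by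
      have : HasDerivAt (fun t : ℝ => -(p*t)) (-p) t := by
        exact ((((hasDerivAt_id t).const_mul p).neg : HasDerivAt (fun y : ℝ => -(p * id y)) (-(p*1)) t)).congr_deriv (by ring)
      exact (Real.hasDerivAt_exp _).comp t this
    have h2 : HasDerivAt (fun t => deriv x t - q * x t)
        (deriv (deriv x) t - q * deriv x t) t := by
      exact ((hx2 t).hasDerivAt).sub (((hx1 t).hasDerivAt).const_mul q)
    have := h1.mul h2
    refine this.congr_deriv ?_
    ring
  have hkey : ∀ t ∈ interior (Set.Ici (0:ℝ)), deriv h t = 0 := by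
    intro t ht
    rw [interior_Ici] at ht
    have ht0 : (0:ℝ) ≤ t := le_of_lt ht
    have heq := hode t ht0
    have hx'' : deriv (deriv x) t = -(M * x t) - deriv x t / (1+M) := by
      field_simp
      linarith
    rw [(hder t).deriv, hx'', hq]
    have : -(M * x t) - deriv x t / (1+M) - (-(1/(1+M)) - p) * deriv x t
        - p * (deriv x t - (-(1/(1+M)) - p) * x t) = 0 := by
      field_simp
      linear_combination (-(x t)) * hMp * (1+M) ^ 0
    rw [this, mul_zero]
  have hcont : ContinuousOn h (Set.Ici (0:ℝ)) :=
    (Continuous.mul (Real.continuous_exp.comp ((continuous_const.mul continuous_id).neg))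
      ((hx2.continuous.sub (continuous_const.mul hx1.continuous)))).continuousOn
  have hdiffOn : DifferentiableOn ℝ h (interior (Set.Ici (0:ℝ))) :=
    fun t _ => ((hder t).differentiableAt).differentiableWithinAt
  have hanti : AntitoneOn h (Set.Ici (0:ℝ)) :=
    antitoneOn_of_deriv_nonpos (convex_Ici 0) hcont hdiffOn
      (fun t ht => le_of_eq (hkey t ht))
  have hmono : MonotoneOn h (Set.Ici (0:ℝ)) :=
    monotoneOn_of_deriv_nonneg (convex_Ici 0) hcont hdiffOn
      (fun t ht => ge_of_eq (hkey t ht))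
  intro t ht
  have h1 : h t = h 0 :=
    le_antisymm (hanti Set.self_mem_Ici ht ht) (hmono Set.self_mem_Ici ht ht)
  have h0 : h 0 = deriv x 0 - q * x 0 := by simp [hh]
  have : Real.exp (-(p*t)) * (deriv x t - q * x t) = deriv x 0 - q * x 0 := by
    rw [← h0, ← h1]
  have hexp : Real.exp (-(p*t)) * Real.exp (p*t) = 1 := by
    rw [← Real.exp_add]; simp
  rw [← this, mul_comm (Real.exp (-(p*t))) _, mul_assoc, hexp, mul_one]


lemma sq_helper2 (a b : ℝ) : (a-b)^2 ≤ 2*a^2 + 2*b^2 := by nlinarith [sq_nonneg (a+b)]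

lemma sq_helper {a b c : ℝ} (h : c^2 ≤ 1) : (a - c*b)^2 ≤ 2*(b^2+a^2) := by
  nlinarith [sq_nonneg (a+c*b), mul_nonneg (sub_nonneg.mpr h) (sq_nonneg b)]

set_option maxHeartbeats 1000000 in
lemma low_freq_bound {M : ℝ} (hM : 0 < M) (hM' : M ≤ 1/10) {x : ℝ → ℝ}
    (hx : ContDiff ℝ 2 x)
    (hode : ∀ t ≥ (0:ℝ), (1+M) * deriv (deriv x) t + M*(1+M) * x t + deriv x t = 0) :
    ∀ t ≥ (0:ℝ), x t ^ 2 ≤ 21 * (x 0 ^ 2 + deriv x 0 ^ 2) * Real.exp (-(2*M) * t) := by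
  have h1M : (0:ℝ) < 1 + M := by linarith
  have harg : (0.516:ℝ) ≤ 1 - 4*M*(1+M)^2 := by nlinarith
  have harg0 : (0:ℝ) ≤ 1 - 4*M*(1+M)^2 := by linarith
  set d : ℝ := Real.sqrt (1 - 4*M*(1+M)^2) with hd
  have hd2 : d^2 = 1 - 4*M*(1+M)^2 := Real.sq_sqrt harg0
  have hdlow : (0.7:ℝ) ≤ d := by
    rw [hd, show (0.7:ℝ) = Real.sqrt 0.49 by
      rw [show (0.49:ℝ) = 0.7^2 by norm_num, Real.sqrt_sq (by norm_num)]]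
    exact Real.sqrt_le_sqrt (by linarith)
  have hdhi : d ≤ 1 := by
    nlinarith [hd2, hdlow]
  clear_value d
  clear hd
  set lp : ℝ := (-1+d)/(2*(1+M)) with hlp
  set lm : ℝ := (-1-d)/(2*(1+M)) with hlm
  have hsum : lp + lm = -(1/(1+M)) := by rw [hlp, hlm]; field_simp; ring
  have hprod : lp * lm = M := by
    rw [hlp, hlm]; field_simp; nlinarith [hd2]
  have E1 := first_order_red hM hx hode hsum hprod
  have E2 := first_order_red hM hx hode (by linarith : lm + lp = -(1/(1+M)))
    (by linarith [hprod, mul_comm lp lm] : lm * lp = M)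
  have hgap : lp - lm = d/(1+M) := by rw [hlp, hlm]; field_simp; ring
  have hgappos : (0:ℝ) < d/(1+M) := by positivity
  intro t ht
  have e1 := E1 t ht
  have e2 := E2 t ht
  set P := x 0
  set Q := deriv x 0
  set Ep := Real.exp (lp * t) with hEp
  set Em := Real.exp (lm * t) with hEm
  have hxt : (d/(1+M)) * x t = (Q - lm*P) * Ep - (Q - lp*P) * Em := by
    rw [← hgap]; linarith [e1, e2]
  have hxt' : x t = ((1+M)/d) * ((Q - lm*P) * Ep - (Q - lp*P) * Em) := by
    rw [← hxt]
    field_simp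
  have hk : (1+M)/d ≤ 11/7 := by
    rw [div_le_div_iff₀ (by linarith) (by norm_num)]
    nlinarith [hdlow]
  have hkpos : (0:ℝ) < (1+M)/d := by positivity
  have hlm2 : lm^2 ≤ 1 := by
    rw [hlm, div_pow, div_le_one (by positivity)]
    nlinarith [hdlow, hdhi]
  have hlp2 : lp^2 ≤ 1 := by
    rw [hlp, div_pow, div_le_one (by positivity)]
    nlinarith [hdlow, hdhi]
  have hlmlp : lm ≤ lp := by
    rw [hlp, hlm, div_le_div_iff₀ (by linarith) (by linarith)]
    nlinarith [hdlow]
  have hEmEp : Em ≤ Ep := Real.exp_le_exp.mpr (by nlinarith)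
  have hEmpos : (0:ℝ) < Em := Real.exp_pos _
  have hEppos : (0:ℝ) < Ep := Real.exp_pos _
  have hlpM : lp ≤ -M := by
    have hb : (0:ℝ) ≤ 1 - 2*M*(1+M) := by nlinarith
    have : d ≤ 1 - 2*M*(1+M) := by
      have key : (0:ℝ) ≤ 4*M^2*(1+M)*(2+M) := by positivity
      have h1 : d^2 ≤ (1 - 2*M*(1+M))^2 := by nlinarith [hd2, key]
      nlinarith [h1, hb, Real.sqrt_nonneg (1 - 4*M*(1+M)^2)]
    rw [hlp, div_le_iff₀ (by linarith)]
    nlinarith [this]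
  have hEpM : Ep ≤ Real.exp (-M * t) := Real.exp_le_exp.mpr (by nlinarith)
  have hexpsq : Real.exp (-M*t) * Real.exp (-M*t) = Real.exp (-(2*M)*t) := by
    rw [← Real.exp_add]; ring_nf
  have hC1 : (Q - lm*P)^2 ≤ 2*(P^2+Q^2) := sq_helper hlm2
  have hC2 : (Q - lp*P)^2 ≤ 2*(P^2+Q^2) := sq_helper hlp2
  have hsplit : ((Q - lm*P) * Ep - (Q - lp*P) * Em)^2
      ≤ 2*(Q - lm*P)^2*Ep^2 + 2*(Q - lp*P)^2*Em^2 := by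
    have := sq_helper2 ((Q - lm*P) * Ep) ((Q - lp*P) * Em)
    calc ((Q - lm*P) * Ep - (Q - lp*P) * Em)^2
        ≤ 2*((Q - lm*P)*Ep)^2 + 2*((Q - lp*P)*Em)^2 := this
      _ = 2*(Q - lm*P)^2*Ep^2 + 2*(Q - lp*P)^2*Em^2 := by ring
  have hEm2 : Em^2 ≤ Ep^2 := pow_le_pow_left₀ hEmpos.le hEmEp 2
  have hEp2 : Ep^2 ≤ Real.exp (-(2*M)*t) := by
    calc Ep^2 ≤ (Real.exp (-M*t))^2 := pow_le_pow_left₀ hEppos.le hEpM 2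
      _ = Real.exp (-(2*M)*t) := by rw [sq, hexpsq]
  have hmain : ((Q - lm*P) * Ep - (Q - lp*P) * Em)^2 ≤ 8*(P^2+Q^2)*Ep^2 := by
    have m1 : (Q-lm*P)^2*Ep^2 ≤ 2*(P^2+Q^2)*Ep^2 := mul_le_mul_of_nonneg_right hC1 (sq_nonneg Ep)
    have m2 : (Q-lp*P)^2*Em^2 ≤ (Q-lp*P)^2*Ep^2 := mul_le_mul_of_nonneg_left hEm2 (sq_nonneg _)
    have m3 : (Q-lp*P)^2*Ep^2 ≤ 2*(P^2+Q^2)*Ep^2 := mul_le_mul_of_nonneg_right hC2 (sq_nonneg Ep)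
    linarith [hsplit, m1, m2, m3]
  have hsq : x t ^2 = ((1+M)/d)^2 * ((Q - lm*P) * Ep - (Q - lp*P) * Em)^2 := by
    rw [hxt']; ring
  have hk2 : ((1+M)/d)^2 ≤ (11/7)^2 := pow_le_pow_left₀ hkpos.le hk 2
  calc x t ^ 2 = ((1+M)/d)^2 * ((Q - lm*P) * Ep - (Q - lp*P) * Em)^2 := hsq
    _ ≤ (11/7)^2 * (8*(P^2+Q^2)*Ep^2) := by
        apply mul_le_mul hk2 hmain (sq_nonneg _) (by norm_num)
    _ ≤ 21 * (P^2 + Q^2) * Real.exp (-(2*M)*t) := by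
        have hmm : (P^2+Q^2)*Ep^2 ≤ (P^2+Q^2)*Real.exp (-(2*M)*t) :=
          mul_le_mul_of_nonneg_left hEp2 (by positivity)
        have hy : (0:ℝ) ≤ (P^2+Q^2)*Real.exp (-(2*M)*t) := by positivity
        linarith [hmm, hy]


lemma quad_p {M m P Q : ℝ} (hM : 0 < M) (hm : 0 < m) (hm1 : m ≤ 1) (hmM : m ≤ M) :
    (0:ℝ) ≤ 2*(1+M)*Q^2 + M*(1+M)*P^2 + 2*m*(P*Q) := by
  have h1 : m^2 ≤ M*(1+M) := by nlinarith
  nlinarith [sq_nonneg (m*P+Q), mul_nonneg (sub_nonneg.mpr h1) (sq_nonneg P), sq_nonneg Q]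

lemma quad_q {M m P Q : ℝ} (hM : 0 < M) (hm : 0 < m) (hm1 : m ≤ 1) (hmM : m ≤ M) :
    m*(P*Q) ≤ (1/2)*((1+M)*Q^2 + M*(1+M)*P^2) := by
  have h1 : m^2 ≤ M*(1+M) := by nlinarith
  nlinarith [sq_nonneg (m*P-Q), mul_nonneg (sub_nonneg.mpr h1) (sq_nonneg P), sq_nonneg Q]

lemma key_low {M P Q R r : ℝ} (hM : 0 < M) (hM1 : M ≤ 1)
    (hR : (1+M)*R = -(M*(1+M)*P) - Q) (hr : r * (3*(1+M)) = M) :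
    r*((1+M)*Q^2 + M*(1+M)*P^2 + M*(P*Q))
      + (2*(1+M)*Q*R + 2*M*(1+M)*P*Q + M*(Q^2 + P*R)) ≤ 0 := by
  have h1M : (0:ℝ) < 1 + M := by linarith
  have h3 : (0:ℝ) < 3*(1+M)^2 := by positivity
  have e1 : (1+M)*(2*(1+M)*Q*R + 2*M*(1+M)*P*Q + M*(Q^2 + P*R))
      = -((2-M)*(1+M)*Q^2) - M^2*(1+M)*P^2 - M*(P*Q) := by
    linear_combination (2*(1+M)*Q + M*P) * hR
  have e2 : 3*(1+M)^2 * (r*((1+M)*Q^2 + M*(1+M)*P^2 + M*(P*Q)))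
      = M*(1+M)*((1+M)*Q^2 + M*(1+M)*P^2 + M*(P*Q)) := by
    linear_combination ((1+M)*((1+M)*Q^2 + M*(1+M)*P^2 + M*(P*Q))) * hr
  have hpoly : M*(1+M)*((1+M)*Q^2 + M*(1+M)*P^2 + M*(P*Q))
      + 3*(1+M)*(-((2-M)*(1+M)*Q^2) - M^2*(1+M)*P^2 - M*(P*Q)) ≤ 0 := by
    have c1 : (0:ℝ) ≤ (1+M)*(3-M)/2 * (M*P+Q)^2 :=
      mul_nonneg (by nlinarith) (sq_nonneg _)
    have c2 : (0:ℝ) ≤ (1+M)*(4.5+2.5*M-4*M^2) * Q^2 :=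
      mul_nonneg (by nlinarith) (sq_nonneg _)
    have c3 : (0:ℝ) ≤ (1+M)*(M^2*(0.5+2.5*M)) * P^2 :=
      mul_nonneg (by nlinarith) (sq_nonneg _)
    nlinarith [c1, c2, c3]
  have h0 : 3*(1+M)^2 * (r*((1+M)*Q^2 + M*(1+M)*P^2 + M*(P*Q))
      + (2*(1+M)*Q*R + 2*M*(1+M)*P*Q + M*(Q^2 + P*R))) ≤ 3*(1+M)^2 * 0 := by
    rw [mul_zero]
    calc 3*(1+M)^2 * (r*((1+M)*Q^2 + M*(1+M)*P^2 + M*(P*Q))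
          + (2*(1+M)*Q*R + 2*M*(1+M)*P*Q + M*(Q^2 + P*R)))
        = 3*(1+M)^2 * (r*((1+M)*Q^2 + M*(1+M)*P^2 + M*(P*Q)))
          + 3*(1+M)*((1+M)*(2*(1+M)*Q*R + 2*M*(1+M)*P*Q + M*(Q^2 + P*R))) := by ring
      _ = M*(1+M)*((1+M)*Q^2 + M*(1+M)*P^2 + M*(P*Q))
          + 3*(1+M)*(-((2-M)*(1+M)*Q^2) - M^2*(1+M)*P^2 - M*(P*Q)) := by rw [e1, e2]
      _ ≤ 0 := hpoly
  exact (mul_le_mul_iff_right₀ h3).mp h0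

lemma key_high {M P Q R r : ℝ} (hM1 : 1 ≤ M)
    (hR : (1+M)*R = -(M*(1+M)*P) - Q) (hr : r * (3*(1+M)) = 1) :
    r*((1+M)*Q^2 + M*(1+M)*P^2 + 1*(P*Q))
      + (2*(1+M)*Q*R + 2*M*(1+M)*P*Q + 1*(Q^2 + P*R)) ≤ 0 := by
  have hM : (0:ℝ) < M := by linarith
  have h1M : (0:ℝ) < 1 + M := by linarith
  have h3 : (0:ℝ) < 3*(1+M)^2 := by positivity
  have e1 : (1+M)*(2*(1+M)*Q*R + 2*M*(1+M)*P*Q + (Q^2 + P*R))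
      = -((1+M)*Q^2) - M*(1+M)*P^2 - P*Q := by
    linear_combination (2*(1+M)*Q + P) * hR
  have e2 : 3*(1+M)^2 * (r*((1+M)*Q^2 + M*(1+M)*P^2 + (P*Q)))
      = (1+M)*((1+M)*Q^2 + M*(1+M)*P^2 + (P*Q)) := by
    linear_combination ((1+M)*((1+M)*Q^2 + M*(1+M)*P^2 + (P*Q))) * hr
  have hpoly : (1+M)*((1+M)*Q^2 + M*(1+M)*P^2 + (P*Q))
      + 3*(1+M)*(-((1+M)*Q^2) - M*(1+M)*P^2 - P*Q) ≤ 0 := by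
    nlinarith [sq_nonneg (P + (1+M)*Q), mul_nonneg (sub_nonneg.mpr hM1) (sq_nonneg P),
      sq_nonneg P, sq_nonneg Q, sq_nonneg ((1+M)*Q)]
  have h0 : 3*(1+M)^2 * (r*((1+M)*Q^2 + M*(1+M)*P^2 + 1*(P*Q))
      + (2*(1+M)*Q*R + 2*M*(1+M)*P*Q + 1*(Q^2 + P*R))) ≤ 3*(1+M)^2 * 0 := by
    rw [mul_zero]
    calc 3*(1+M)^2 * (r*((1+M)*Q^2 + M*(1+M)*P^2 + 1*(P*Q))
          + (2*(1+M)*Q*R + 2*M*(1+M)*P*Q + 1*(Q^2 + P*R)))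
        = 3*(1+M)^2 * (r*((1+M)*Q^2 + M*(1+M)*P^2 + (P*Q)))
          + 3*(1+M)*((1+M)*(2*(1+M)*Q*R + 2*M*(1+M)*P*Q + (Q^2 + P*R))) := by ring
      _ = (1+M)*((1+M)*Q^2 + M*(1+M)*P^2 + (P*Q))
          + 3*(1+M)*(-((1+M)*Q^2) - M*(1+M)*P^2 - P*Q) := by rw [e1, e2]
      _ ≤ 0 := hpoly
  exact (mul_le_mul_iff_right₀ h3).mp h0


lemma energy_decay {M : ℝ} (hM : 0 < M) {x : ℝ → ℝ}
    (hx : ContDiff ℝ 2 x)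
    (hode : ∀ t ≥ (0:ℝ), (1+M) * deriv (deriv x) t + M*(1+M) * x t + deriv x t = 0) :
    ∀ t ≥ (0:ℝ), x t ^ 2 ≤
      3 * Real.exp (-(min 1 M / (3*(1+M))) * t) * (deriv x 0 ^ 2 / M + x 0 ^ 2) := by
  have h1M : (0:ℝ) < 1 + M := by linarith
  set m : ℝ := min 1 M with hmdef
  have hm : 0 < m := lt_min one_pos hM
  have hm1 : m ≤ 1 := min_le_left _ _
  have hmM : m ≤ M := min_le_right _ _
  set r : ℝ := m / (3*(1+M)) with hrdef
  have hr : r * (3*(1+M)) = m := by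
    rw [hrdef]; field_simp
  have hrpos : 0 < r := by positivity
  have hdiff : Differentiable ℝ x ∧ ContDiff ℝ 1 (deriv x) := by
    have := (contDiff_succ_iff_deriv (n := 1)).mp (by exact_mod_cast hx)
    exact ⟨this.1, this.2.2⟩
  have hx1 : Differentiable ℝ x := hdiff.1
  have hx2 : Differentiable ℝ (deriv x) := hdiff.2.differentiable one_ne_zero
  set L : ℝ → ℝ := fun t => (1+M)*(deriv x t)^2 + M*(1+M)*(x t)^2 + m*(x t * deriv x t)
    with hLdef
  have hLder : ∀ t, HasDerivAt L
      (2*(1+M)*(deriv x t)*(deriv (deriv x) t) + 2*M*(1+M)*(x t)*(deriv x t)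
        + m*((deriv x t)^2 + x t * deriv (deriv x) t)) t := by
    intro t
    have hxd : HasDerivAt x (deriv x t) t := (hx1 t).hasDerivAt
    have hxd2 : HasDerivAt (deriv x) (deriv (deriv x) t) t := (hx2 t).hasDerivAt
    have h1 : HasDerivAt (fun s => (1+M)*(deriv x s)^2)
        ((1+M)*(2 * deriv x t * deriv (deriv x) t)) t := by
      have : HasDerivAt (fun s => (1+M)*(deriv x s * deriv x s))
          ((1+M)*(deriv (deriv x) t * deriv x t + deriv x t * deriv (deriv x) t)) t :=
        (hxd2.mul hxd2).const_mul ((1:ℝ)+M)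
      convert this using 2 <;> ring
    have h2 : HasDerivAt (fun s => M*(1+M)*(x s)^2)
        (M*(1+M)*(2 * x t * deriv x t)) t := by
      have : HasDerivAt (fun s => M*(1+M)*(x s * x s))
          (M*(1+M)*(deriv x t * x t + x t * deriv x t)) t :=
        (hxd.mul hxd).const_mul (M*((1:ℝ)+M))
      convert this using 2 <;> ring
    have h3 : HasDerivAt (fun s => m*(x s * deriv x s))
        (m*(deriv x t * deriv x t + x t * deriv (deriv x) t)) t :=
      (hxd.mul hxd2).const_mul m
    have := (h1.add h2).add h3
    refine this.congr_deriv ?_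
    ring
  set G : ℝ → ℝ := fun t => Real.exp (r*t) * L t with hGdef
  have hGder : ∀ t, HasDerivAt G (Real.exp (r*t) * (r * L t +
      (2*(1+M)*(deriv x t)*(deriv (deriv x) t) + 2*M*(1+M)*(x t)*(deriv x t)
        + m*((deriv x t)^2 + x t * deriv (deriv x) t)))) t := by
    intro t
    have he : HasDerivAt (fun t => Real.exp (r*t)) (Real.exp (r*t) * r) t := by
      have : HasDerivAt (fun t : ℝ => r*t) r t := by
        simpa using (hasDerivAt_id t).const_mul r
      exact (Real.hasDerivAt_exp _).comp t this
    have := he.mul (hLder t)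
    refine this.congr_deriv ?_
    ring
  have hkey : ∀ t ∈ interior (Set.Ici (0:ℝ)), deriv G t ≤ 0 := by
    intro t ht
    rw [interior_Ici] at ht
    have ht0 : (0:ℝ) ≤ t := le_of_lt ht
    have heq := hode t ht0
    rw [(hGder t).deriv]
    apply mul_nonpos_of_nonneg_of_nonpos (Real.exp_nonneg _)
    have hR : (1+M) * (deriv (deriv x) t) = -(M*(1+M)*(x t)) - deriv x t := by linarith
    rcases le_total M 1 with hc | hc
    · have hmm : m = M := min_eq_right hc
      have hrr : r * (3*(1+M)) = M := by rw [hr, hmm]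
      have := key_low hM hc hR hrr
      calc r * L t + (2*(1+M)*(deriv x t)*(deriv (deriv x) t) + 2*M*(1+M)*(x t)*(deriv x t)
            + m*((deriv x t)^2 + x t * deriv (deriv x) t))
          = r*((1+M)*(deriv x t)^2 + M*(1+M)*(x t)^2 + M*((x t) * deriv x t))
            + (2*(1+M)*(deriv x t)*(deriv (deriv x) t) + 2*M*(1+M)*(x t)*(deriv x t)
              + M*((deriv x t)^2 + x t * deriv (deriv x) t)) := by
            simp only [hLdef, hmm]; try ring
        _ ≤ 0 := this
    · have hmm : m = 1 := min_eq_left hc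
      have hrr : r * (3*(1+M)) = 1 := by rw [hr, hmm]
      have := key_high hc hR hrr
      calc r * L t + (2*(1+M)*(deriv x t)*(deriv (deriv x) t) + 2*M*(1+M)*(x t)*(deriv x t)
            + m*((deriv x t)^2 + x t * deriv (deriv x) t))
          = r*((1+M)*(deriv x t)^2 + M*(1+M)*(x t)^2 + 1*((x t) * deriv x t))
            + (2*(1+M)*(deriv x t)*(deriv (deriv x) t) + 2*M*(1+M)*(x t)*(deriv x t)
              + 1*((deriv x t)^2 + x t * deriv (deriv x) t)) := by
            simp only [hLdef, hmm]; try ring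
        _ ≤ 0 := this
  have hLcont : Continuous L := by
    rw [hLdef]
    exact ((continuous_const.mul ((hx2.continuous).pow 2)).add
        (continuous_const.mul ((hx1.continuous).pow 2))).add
        (continuous_const.mul (hx1.continuous.mul hx2.continuous))
  have hGcont : ContinuousOn G (Set.Ici (0:ℝ)) := by
    rw [hGdef]
    exact ((Real.continuous_exp.comp (continuous_const.mul continuous_id)).mul hLcont).continuousOn
  have hGdiff : DifferentiableOn ℝ G (interior (Set.Ici (0:ℝ))) :=
    fun t _ => ((hGder t).differentiableAt).differentiableWithinAt
  have hanti : AntitoneOn G (Set.Ici (0:ℝ)) :=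
    antitoneOn_of_deriv_nonpos (convex_Ici 0) hGcont hGdiff hkey
  intro t ht
  have hGle : G t ≤ G 0 := hanti Set.self_mem_Ici ht ht
  have hG0 : G 0 = L 0 := by rw [hGdef]; simp
  have hLt : L t ≤ Real.exp (-(r*t)) * L 0 := by
    have h1 : Real.exp (r*t) * L t ≤ L 0 := by rw [hGdef] at hGle; rw [← hG0]; exact hGle
    have h2 : Real.exp (-(r*t)) * (Real.exp (r*t) * L t) ≤ Real.exp (-(r*t)) * L 0 :=
      mul_le_mul_of_nonneg_left h1 (Real.exp_nonneg _)
    calc L t = Real.exp (-(r*t)) * (Real.exp (r*t) * L t) := by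
          rw [← mul_assoc, ← Real.exp_add]; simp
      _ ≤ Real.exp (-(r*t)) * L 0 := h2
  have hLlow : M*(1+M)*(x t)^2 ≤ 2 * L t := by
    have h := quad_p (P := x t) (Q := deriv x t) hM hm hm1 hmM
    simp only [hLdef]
    linarith [h]
  have hL0up : L 0 ≤ (3/2)*((1+M)*(deriv x 0)^2 + M*(1+M)*(x 0)^2) := by
    have h := quad_q (P := x 0) (Q := deriv x 0) hM hm hm1 hmM
    simp only [hLdef]
    linarith [h]
  have hfin : M*(1+M)*(x t)^2 ≤ 3 * Real.exp (-(r*t)) * ((1+M)*(deriv x 0)^2 + M*(1+M)*(x 0)^2) := by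
    have h2 : 2 * L t ≤ 2 * (Real.exp (-(r*t)) * L 0) := by linarith [hLt]
    have h3 : 2 * (Real.exp (-(r*t)) * L 0)
        ≤ 2 * (Real.exp (-(r*t)) * ((3/2)*((1+M)*(deriv x 0)^2 + M*(1+M)*(x 0)^2))) := by
      have := mul_le_mul_of_nonneg_left hL0up (Real.exp_nonneg (-(r*t)))
      linarith
    calc M*(1+M)*(x t)^2 ≤ 2 * L t := hLlow
      _ ≤ 2 * (Real.exp (-(r*t)) * L 0) := h2
      _ ≤ 2 * (Real.exp (-(r*t)) * ((3/2)*((1+M)*(deriv x 0)^2 + M*(1+M)*(x 0)^2))) := h3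
      _ = 3 * Real.exp (-(r*t)) * ((1+M)*(deriv x 0)^2 + M*(1+M)*(x 0)^2) := by ring
  have hgoal : M*(1+M)*(x t ^ 2) ≤ M*(1+M)*(3 * Real.exp (-(r*t)) * (deriv x 0 ^ 2 / M + x 0 ^ 2)) := by
    have : M*(1+M)*(3 * Real.exp (-(r*t)) * (deriv x 0 ^ 2 / M + x 0 ^ 2))
        = 3 * Real.exp (-(r*t)) * ((1+M)*(deriv x 0)^2 + M*(1+M)*(x 0)^2) := by
      field_simp
    rw [this]
    exact hfin
  have := (mul_le_mul_iff_right₀ (by positivity : (0:ℝ) < M*(1+M))).mp hgoal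
  calc x t ^ 2 ≤ 3 * Real.exp (-(r*t)) * (deriv x 0 ^ 2 / M + x 0 ^ 2) := this
    _ = 3 * Real.exp (-(min 1 M / (3*(1+M))) * t) * (deriv x 0 ^ 2 / M + x 0 ^ 2) := by
        rw [hrdef, hmdef]; ring_nf


lemma abs_sq_eq (z : ℂ) : ‖z‖ ^ 2 = z.re^2 + z.im^2 := by
  rw [Complex.sq_norm, Complex.normSq_apply]; ring

lemma part_bounds {M : ℝ} (hM : 0 < M) {f : ℝ → ℂ} (hf : ContDiff ℝ 2 f)
    (hode0 : ∀ t ≥ (0:ℝ), ((1+M:ℝ):ℂ) * deriv (deriv f) t + ((M*(1+M):ℝ):ℂ) * f t + deriv f t = 0)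
    (P : ℂ →L[ℝ] ℝ) (hP : ∀ (a : ℝ) (z : ℂ), P ((a:ℂ) * z) = a * P z) :
    (∀ t ≥ (0:ℝ), (P (f t)) ^ 2 ≤ 3 * Real.exp (-(min 1 M / (3*(1+M))) * t) *
        ((P (deriv f 0)) ^ 2 / M + (P (f 0)) ^ 2)) ∧
    (M ≤ 1/10 → ∀ t ≥ (0:ℝ), (P (f t)) ^ 2 ≤
        21 * ((P (f 0)) ^ 2 + (P (deriv f 0)) ^ 2) * Real.exp (-(2*M) * t)) := by
  have hfd : Differentiable ℝ f ∧ ContDiff ℝ 1 (deriv f) := by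
    have := (contDiff_succ_iff_deriv (n := 1)).mp (by exact_mod_cast hf)
    exact ⟨this.1, this.2.2⟩
  have hf1 : Differentiable ℝ f := hfd.1
  have hf2 : Differentiable ℝ (deriv f) := hfd.2.differentiable one_ne_zero
  set x : ℝ → ℝ := fun t => P (f t) with hx
  have hxcd : ContDiff ℝ 2 x := P.contDiff.comp hf
  have hd1 : ∀ t, HasDerivAt x (P (deriv f t)) t := fun t =>
    (P.hasFDerivAt.comp_hasDerivAt t ((hf1 t).hasDerivAt))
  have hdx : deriv x = fun t => P (deriv f t) := funext fun t => (hd1 t).deriv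
  have hd2 : ∀ t, HasDerivAt (deriv x) (P (deriv (deriv f) t)) t := by
    rw [hdx]; exact fun t => P.hasFDerivAt.comp_hasDerivAt t ((hf2 t).hasDerivAt)
  have hdx2 : ∀ t, deriv (deriv x) t = P (deriv (deriv f) t) := fun t => (hd2 t).deriv
  have hodex : ∀ t ≥ (0:ℝ), (1+M) * deriv (deriv x) t + M*(1+M) * x t + deriv x t = 0 := by
    intro t ht
    have h := congrArg P (hode0 t ht)
    rw [map_add, map_add, hP, hP, map_zero] at h
    rw [hdx2 t, hdx]
    simp only [hx]
    linarith [h]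
  constructor
  · have := energy_decay hM hxcd hodex
    simpa only [hdx] using this
  · intro h10
    have := low_freq_bound hM h10 hxcd hodex
    simpa only [hdx] using this

lemma complex_bounds {M : ℝ} (hM : 0 < M) {f : ℝ → ℂ} (hf : ContDiff ℝ 2 f)
    (hode : ∀ t > (0:ℝ), ((1+M:ℝ):ℂ) * deriv (deriv f) t + ((M*(1+M):ℝ):ℂ) * f t + deriv f t = 0) :
    (∀ t ≥ (0:ℝ), ‖f t‖ ^ 2 ≤ 3 * Real.exp (-(min 1 M / (3*(1+M))) * t) *
        (‖deriv f 0‖ ^ 2 / M + ‖f 0‖ ^ 2)) ∧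
    (M ≤ 1/10 → ∀ t ≥ (0:ℝ), ‖f t‖ ^ 2 ≤
        21 * (‖f 0‖ ^ 2 + ‖deriv f 0‖ ^ 2) * Real.exp (-(2*M) * t)) := by
  have hfd : Differentiable ℝ f ∧ ContDiff ℝ 1 (deriv f) := by
    have := (contDiff_succ_iff_deriv (n := 1)).mp (by exact_mod_cast hf)
    exact ⟨this.1, this.2.2⟩
  have hf1 : Differentiable ℝ f := hfd.1
  have hf2 : Differentiable ℝ (deriv f) := hfd.2.differentiable one_ne_zero
  have hf2c : Continuous (deriv (deriv f)) := (contDiff_one_iff_deriv.mp hfd.2).2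
  have hode0 : ∀ t ≥ (0:ℝ), ((1+M:ℝ):ℂ) * deriv (deriv f) t + ((M*(1+M):ℝ):ℂ) * f t + deriv f t = 0 := by
    intro t ht
    rcases eq_or_lt_of_le ht with h0 | hpos
    · subst h0
      set E : ℝ → ℂ := fun t => ((1+M:ℝ):ℂ) * deriv (deriv f) t + ((M*(1+M):ℝ):ℂ) * f t + deriv f t
        with hE
      have hEcont : Continuous E := by
        rw [hE]
        exact ((continuous_const.mul hf2c).add (continuous_const.mul hf1.continuous)).add
          hf2.continuous
      have t1 : Filter.Tendsto E (nhdsWithin 0 (Set.Ioi 0)) (nhds (E 0)) :=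
        (hEcont.continuousAt).continuousWithinAt
      have t2 : Filter.Tendsto E (nhdsWithin 0 (Set.Ioi 0)) (nhds 0) := by
        apply Filter.Tendsto.congr' _ tendsto_const_nhds
        filter_upwards [self_mem_nhdsWithin] with s hs
        exact (hode s hs).symm
      exact (tendsto_nhds_unique t1 t2)
    · exact hode t hpos
  have hPre : ∀ (a : ℝ) (z : ℂ), Complex.reCLM ((a:ℂ) * z) = a * Complex.reCLM z := by
    intro a z; simp
  have hPim : ∀ (a : ℝ) (z : ℂ), Complex.imCLM ((a:ℂ) * z) = a * Complex.imCLM z := by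
    intro a z; simp
  have Hre := part_bounds hM hf hode0 Complex.reCLM hPre
  have Him := part_bounds hM hf hode0 Complex.imCLM hPim
  simp only [Complex.reCLM_apply, Complex.imCLM_apply] at Hre Him
  constructor
  · intro t ht
    have h1 := Hre.1 t ht
    have h2 := Him.1 t ht
    rw [abs_sq_eq, abs_sq_eq, abs_sq_eq]
    have e1 : (‖deriv f 0‖ ^ 2 / M + ‖f 0‖ ^ 2) =
        ((deriv f 0).re ^2 / M + (f 0).re^2) + ((deriv f 0).im ^2 / M + (f 0).im^2) := by
      rw [abs_sq_eq, abs_sq_eq]; ring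
    have e2 : ((deriv f 0).re ^ 2 + (deriv f 0).im ^ 2) / M + ((f 0).re ^ 2 + (f 0).im ^ 2)
        = ((deriv f 0).re ^ 2 / M + (f 0).re ^ 2) + ((deriv f 0).im ^ 2 / M + (f 0).im ^ 2) := by
      ring
    rw [e2]
    nlinarith [h1, h2]
  · intro h10 t ht
    have h1 := Him.2 h10 t ht
    have h2 := Hre.2 h10 t ht
    rw [abs_sq_eq, abs_sq_eq, abs_sq_eq]
    nlinarith [h1, h2, Real.exp_pos (-(2*M)*t)]


lemma log_lower {s : ℝ} (h0 : 0 ≤ s) (h1 : s ≤ 1) : s/2 ≤ Real.log (1+s) := by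
  have he : Real.exp (s/2) ≤ 1 + s := by
    have h2 : 1 - s/2 ≤ Real.exp (-(s/2)) := by
      have := Real.add_one_le_exp (-(s/2)); linarith
    have h3 : (0:ℝ) < 1 - s/2 := by linarith
    have h4 : Real.exp (s/2) = (Real.exp (-(s/2)))⁻¹ := by
      rw [← Real.exp_neg]; ring_nf
    rw [h4]
    have h5 : (Real.exp (-(s/2)))⁻¹ ≤ (1 - s/2)⁻¹ := by
      apply inv_anti₀ h3 h2
    have h6 : (1 - s/2)⁻¹ ≤ 1 + s := by
      rw [inv_le_iff_one_le_mul₀ h3]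
      nlinarith
    linarith
  calc s/2 = Real.log (Real.exp (s/2)) := (Real.log_exp _).symm
    _ ≤ Real.log (1+s) := Real.log_le_log (Real.exp_pos _) he

lemma mlog_small {n : ℕ} {ξ : EuclideanSpace ℝ (Fin n)} (h : mlog ξ ≤ 1/10) :
    ‖ξ‖^2 ≤ 1 := by
  have hpos : (0:ℝ) < 1 + ‖ξ‖^2 := by positivity
  have := (Real.log_le_iff_le_exp hpos).mp h
  have h2 : 1 - (1:ℝ)/10 ≤ Real.exp (-(1/10)) := by
    have := Real.add_one_le_exp (-(1/10:ℝ)); linarith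
  have h3 : Real.exp (1/10:ℝ) ≤ (9/10:ℝ)⁻¹ := by
    rw [show Real.exp (1/10:ℝ) = (Real.exp (-(1/10:ℝ)))⁻¹ by rw [← Real.exp_neg]; ring_nf]
    exact inv_anti₀ (by norm_num) (by linarith)
  nlinarith [this, h3]

lemma mlog_ge {n : ℕ} {ξ : EuclideanSpace ℝ (Fin n)} (h : mlog ξ ≤ 1/10) :
    ‖ξ‖^2 / 2 ≤ mlog ξ := log_lower (by positivity) (mlog_small h)

lemma mlog_nonneg {n : ℕ} (ξ : EuclideanSpace ℝ (Fin n)) : 0 ≤ mlog ξ :=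
  Real.log_nonneg (by nlinarith [sq_nonneg ‖ξ‖])

lemma mlog_pos {n : ℕ} {ξ : EuclideanSpace ℝ (Fin n)} (h : ξ ≠ 0) : 0 < mlog ξ := by
  have : (0:ℝ) < ‖ξ‖ := norm_pos_iff.mpr h
  apply Real.log_pos
  nlinarith

lemma exp_neg_le_rpow {k X : ℝ} (hk : 0 < k) (hX : 0 < X) :
    Real.exp (-X) ≤ k ^ k * X ^ (-k) := by
  have h1 : X ≤ k * Real.exp (X/k) := by
    have := Real.add_one_le_exp (X/k)
    have h2 : X/k ≤ Real.exp (X/k) := by linarith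
    calc X = k * (X/k) := by field_simp
      _ ≤ k * Real.exp (X/k) := by
          exact mul_le_mul_of_nonneg_left h2 hk.le
  have h2 : X ^ k ≤ k^k * Real.exp X := by
    calc X ^ k ≤ (k * Real.exp (X/k)) ^ k :=
          Real.rpow_le_rpow hX.le h1 hk.le
      _ = k^k * (Real.exp (X/k))^k := Real.mul_rpow hk.le (Real.exp_nonneg _)
      _ = k^k * Real.exp X := by
          rw [← Real.exp_mul]
          congr 2
          field_simp
  have hXk : (0:ℝ) < X ^ k := Real.rpow_pos_of_pos hX k
  rw [Real.exp_neg, Real.rpow_neg hX.le]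
  rw [show k^k * (X^k)⁻¹ = k^k / X^k from by rw [div_eq_mul_inv], ← one_div,
    div_le_div_iff₀ (Real.exp_pos X) hXk]
  nlinarith [h2]

lemma ft_abs_le {n : ℕ} {f : EuclideanSpace ℝ (Fin n) → ℂ} (hf : Integrable f)
    (ξ : EuclideanSpace ℝ (Fin n)) : ‖ft f ξ‖ ≤ normL1 f := by
  rw [ft, normL1]
  rw [show (fun x => ‖f x‖) = fun x => ‖f x‖ from rfl]
  calc ‖∫ x, Complex.exp (-Complex.I * ((inner ℝ x ξ : ℝ) : ℂ)) * f x‖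
      = ‖∫ x, Complex.exp (-Complex.I * ((inner ℝ x ξ : ℝ) : ℂ)) * f x‖ := rfl
    _ ≤ ∫ x, ‖Complex.exp (-Complex.I * ((inner ℝ x ξ : ℝ) : ℂ)) * f x‖ :=
        norm_integral_le_integral_norm _
    _ = ∫ x, ‖f x‖ := by
        congr 1
        funext x
        rw [norm_mul]
        have : ‖Complex.exp (-Complex.I * ((inner ℝ x ξ : ℝ) : ℂ))‖ = 1 := by
          rw [Complex.norm_exp]
          simp
        rw [this, one_mul]

lemma normL1_nonneg {n : ℕ} (f : EuclideanSpace ℝ (Fin n) → ℂ) : 0 ≤ normL1 f :=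
  integral_nonneg (fun x => norm_nonneg _)

lemma normL1_le_norm11 {n : ℕ} {f : EuclideanSpace ℝ (Fin n) → ℂ} (hf : MemL11 f) :
    normL1 f ≤ norm11 f := by
  rw [normL1, norm11]
  apply integral_mono (by simpa using hf.1.norm) hf.2
  intro x
  have h1 : (0:ℝ) ≤ ‖f x‖ := norm_nonneg _
  have h2 : (0:ℝ) ≤ ‖x‖ := norm_nonneg x
  dsimp only
  nlinarith [mul_nonneg h2 h1]

lemma integrable_gauss {n : ℕ} {b : ℝ} (hb : 0 < b) :
    Integrable (fun ξ : EuclideanSpace ℝ (Fin n) => Real.exp (-b * ‖ξ‖^2)) := by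
  have h := (GaussianFourier.integrable_cexp_neg_mul_sq_norm_add (V := EuclideanSpace ℝ (Fin n))
    (b := (b:ℂ)) (by simpa using hb) 0 0).norm
  apply h.congr
  filter_upwards with ξ
  simp only [zero_mul, add_zero, Complex.norm_exp]
  rw [show (-(b:ℂ) * ((‖ξ‖:ℂ))^2) = ((-b*‖ξ‖^2:ℝ):ℂ) by push_cast; ring, Complex.ofReal_re]

lemma integral_gauss {n : ℕ} {b : ℝ} (hb : 0 < b) :
    ∫ ξ : EuclideanSpace ℝ (Fin n), Real.exp (-b * ‖ξ‖^2) = (π / b) ^ ((n:ℝ)/2) := by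
  rw [GaussianFourier.integral_rexp_neg_mul_sq_norm hb]
  norm_num [finrank_euclideanSpace_fin]



set_option maxHeartbeats 2000000 in
theorem optimal_L2_decay (n : ℕ) (hn : 4 ≤ n) (l : ℝ) (hl1 : 1 ≤ l)
    (hl2 : l ≤ (n:ℝ) / 2 - 1)
    (u₀ u₁ : EuclideanSpace ℝ (Fin n) → ℂ)
    (h0 : MemL11 u₀) (h1 : MemL11 u₁)
    (h0Y : MemY u₀ (l + 1)) (h1Y : MemY u₁ l)
    (v : ℝ → EuclideanSpace ℝ (Fin n) → ℂ) (hv : IsFourierSol u₀ u₁ v) :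
    ∃ C T : ℝ, 0 < C ∧ 1 ≤ T ∧ ∀ t ≥ T,
      Real.sqrt (∫ ξ, ‖v t ξ‖ ^ 2) ≤ C * I0 u₀ u₁ l * t ^ (-(l + 1) / 2) := by
  obtain ⟨hmeas, hsol⟩ := hv
  have hπ : (0:ℝ) < π := Real.pi_pos
  have hkpos : (0:ℝ) < l + 1 := by linarith
  have hk2 : l + 1 ≤ (n:ℝ)/2 := by linarith
  have hY0 : 0 ≤ Ysq u₀ (l+1) := integral_nonneg (fun ξ =>
    mul_nonneg (Real.rpow_nonneg (by linarith [mlog_nonneg ξ]) _) (sq_nonneg _))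
  have hY1 : 0 ≤ Ysq u₁ l := integral_nonneg (fun ξ =>
    mul_nonneg (Real.rpow_nonneg (by linarith [mlog_nonneg ξ]) _) (sq_nonneg _))
  have hA0 : 0 ≤ normL1 u₀ := normL1_nonneg u₀
  have hA1 : 0 ≤ normL1 u₁ := normL1_nonneg u₁
  have hA0le : normL1 u₀ ≤ norm11 u₀ := normL1_le_norm11 h0
  have hA1le : normL1 u₁ ≤ norm11 u₁ := normL1_le_norm11 h1
  have hA0sq : normL1 u₀ ^ 2 ≤ norm11 u₀ ^ 2 := pow_le_pow_left₀ hA0 hA0le 2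
  have hA1sq : normL1 u₁ ^ 2 ≤ norm11 u₁ ^ 2 := pow_le_pow_left₀ hA1 hA1le 2
  set SS : ℝ := norm11 u₀ ^ 2 + norm11 u₁ ^ 2 + Ysq u₀ (l + 1) + Ysq u₁ l with hSS
  have hSSnn : 0 ≤ SS := by
    rw [hSS]
    have := sq_nonneg (norm11 u₀); have := sq_nonneg (norm11 u₁)
    linarith
  set C0 : ℝ := 21 * π ^ ((n:ℝ)/2) + 33 * (l+1)^(l+1) * 30^(l+1) with hC0def
  have hC0 : 0 < C0 := by
    rw [hC0def]
    have h1' : (0:ℝ) < π ^ ((n:ℝ)/2) := Real.rpow_pos_of_pos hπ _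
    have h2' : (0:ℝ) < (l+1)^(l+1) := Real.rpow_pos_of_pos hkpos _
    have h3' : (0:ℝ) < (30:ℝ)^(l+1) := Real.rpow_pos_of_pos (by norm_num) _
    positivity
  refine ⟨Real.sqrt C0, 1, Real.sqrt_pos.mpr hC0, le_refl 1, ?_⟩
  intro t ht
  have ht0 : (0:ℝ) < t := lt_of_lt_of_le one_pos ht
  have htnn : (0:ℝ) ≤ t := ht0.le
  set S : Set (EuclideanSpace ℝ (Fin n)) := {ξ | mlog ξ ≤ 1/10} with hSdef
  have hmlog_meas : Measurable (fun ξ : EuclideanSpace ℝ (Fin n) => mlog ξ) := by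
    have hc : Continuous (fun ξ : EuclideanSpace ℝ (Fin n) => (1 + ‖ξ‖^2)) := by continuity
    exact Real.measurable_log.comp hc.measurable
  have hSm : MeasurableSet S := measurableSet_le hmlog_meas measurable_const
  set KL : ℝ := 21 * (normL1 u₀ ^ 2 + normL1 u₁ ^ 2) with hKL
  set KH : ℝ := 3 * (l+1)^(l+1) * 30^(l+1) * t ^ (-(l+1)) with hKH
  have htk : (0:ℝ) < t ^ (-(l+1)) := Real.rpow_pos_of_pos ht0 _
  have hKHpos : 0 < KH := by
    rw [hKH]
    have h2' : (0:ℝ) < (l+1)^(l+1) := Real.rpow_pos_of_pos hkpos _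
    have h3' : (0:ℝ) < (30:ℝ)^(l+1) := Real.rpow_pos_of_pos (by norm_num) _
    positivity
  have hKLnn : 0 ≤ KL := by rw [hKL]; positivity
  set lowf : EuclideanSpace ℝ (Fin n) → ℝ :=
    fun ξ => KL * Real.exp (-t * ‖ξ‖^2) with hlowf
  set highf : EuclideanSpace ℝ (Fin n) → ℝ := fun ξ =>
    KH * ((1+mlog ξ)^(l+1) * ‖ft u₀ ξ‖^2
      + 11 * ((1+mlog ξ)^l * ‖ft u₁ ξ‖^2)) with hhighf
  have hhighf_nonneg : ∀ ξ, 0 ≤ highf ξ := by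
    intro ξ
    have hmn := mlog_nonneg ξ
    have e1 : (0:ℝ) ≤ (1+mlog ξ)^(l+1) := Real.rpow_nonneg (by linarith) _
    have e2 : (0:ℝ) ≤ (1+mlog ξ)^l := Real.rpow_nonneg (by linarith) _
    have e3 : (0:ℝ) ≤ ‖ft u₀ ξ‖^2 := sq_nonneg _
    have e4 : (0:ℝ) ≤ ‖ft u₁ ξ‖^2 := sq_nonneg _
    rw [hhighf]
    have : (0:ℝ) ≤ (1+mlog ξ)^(l+1) * ‖ft u₀ ξ‖^2
        + 11 * ((1+mlog ξ)^l * ‖ft u₁ ξ‖^2) := by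
      have := mul_nonneg e1 e3
      have := mul_nonneg e2 e4
      nlinarith
    exact mul_nonneg hKHpos.le this
  have hlowint : Integrable lowf := (integrable_gauss ht0).const_mul KL
  have hhighint : Integrable highf := (h0Y.add (h1Y.const_mul 11)).const_mul KH
  have hlowind : Integrable (fun ξ => S.indicator lowf ξ) := hlowint.indicator hSm
  have hhighind : Integrable (fun ξ => Sᶜ.indicator highf ξ) := hhighint.indicator hSm.compl
  haveI : Nonempty (Fin n) := Fin.pos_iff_nonempty.mp (by omega)
  have hne : ∀ᵐ (ξ : EuclideanSpace ℝ (Fin n)), ξ ≠ 0 := by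
    have h0' : volume ({0} : Set (EuclideanSpace ℝ (Fin n))) = 0 := measure_singleton 0
    have hs : {ξ : EuclideanSpace ℝ (Fin n) | ¬ ξ ≠ 0} = {0} := by ext x; simp
    exact ae_iff.mpr (by rwa [hs])
  have hbound : ∀ᵐ ξ, ‖v t ξ‖^2 ≤ S.indicator lowf ξ + Sᶜ.indicator highf ξ := by
    filter_upwards [hne] with ξ hξ
    obtain ⟨hcd, hodeξ, hinit0, hinit1⟩ := hsol ξ
    have hM : 0 < mlog ξ := mlog_pos hξ
    have HB := complex_bounds hM hcd hodeξ
    simp only [hinit0, hinit1] at HB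
    by_cases hS : mlog ξ ≤ 1/10
    · have hmem : ξ ∈ S := by rw [hSdef]; exact hS
      have hnotc : ξ ∉ Sᶜ := by simp [hmem]
      rw [Set.indicator_of_mem hmem, Set.indicator_of_notMem hnotc, add_zero]
      have h21 := HB.2 hS t htnn
      have hft0 : ‖ft u₀ ξ‖^2 ≤ normL1 u₀ ^ 2 :=
        pow_le_pow_left₀ (norm_nonneg _) (ft_abs_le h0.1 ξ) 2
      have hft1 : ‖ft u₁ ξ‖^2 ≤ normL1 u₁ ^ 2 :=
        pow_le_pow_left₀ (norm_nonneg _) (ft_abs_le h1.1 ξ) 2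
      have hexp : Real.exp (-(2*mlog ξ)*t) ≤ Real.exp (-t * ‖ξ‖^2) := by
        apply Real.exp_le_exp.mpr
        have hg := mlog_ge hS
        nlinarith
      have e1 : 21 * (‖ft u₀ ξ‖^2 + ‖ft u₁ ξ‖^2) ≤ KL := by
        rw [hKL]; linarith
      have e0 : (0:ℝ) ≤ 21 * (‖ft u₀ ξ‖^2 + ‖ft u₁ ξ‖^2) := by
        positivity
      calc ‖v t ξ‖^2
          ≤ 21 * (‖ft u₀ ξ‖^2 + ‖ft u₁ ξ‖^2)
            * Real.exp (-(2*mlog ξ)*t) := h21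
        _ ≤ KL * Real.exp (-t * ‖ξ‖^2) :=
            mul_le_mul e1 hexp (Real.exp_nonneg _) hKLnn
        _ = lowf ξ := by rw [hlowf]
    · have hnot : ξ ∉ S := by rw [hSdef]; exact hS
      have hmem : ξ ∈ Sᶜ := hnot
      rw [Set.indicator_of_notMem hnot, Set.indicator_of_mem hmem, zero_add]
      have hM10 : (1:ℝ)/10 < mlog ξ := lt_of_not_ge hS
      set M := mlog ξ with hMdef
      have h1M : (0:ℝ) < 1 + M := by linarith
      have h3 := HB.1 t htnn
      set A := ‖ft u₀ ξ‖^2 with hA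
      set B := ‖ft u₁ ξ‖^2 with hB
      have hAnn : 0 ≤ A := sq_nonneg _
      have hBnn : 0 ≤ B := sq_nonneg _
      have e1 : Real.exp (-(min 1 M/(3*(1+M)))*t) ≤ Real.exp (-(t/(30*(1+M)))) := by
        apply Real.exp_le_exp.mpr
        have hmin : (1:ℝ)/10 ≤ min 1 M := le_min (by norm_num) hM10.le
        have hdiff : min 1 M/(3*(1+M))*t - t/(30*(1+M)) = (min 1 M - 1/10) * t / (3*(1+M)) := by
          field_simp
          ring
        have hnn : 0 ≤ (min 1 M - 1/10) * t / (3*(1+M)) :=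
          div_nonneg (mul_nonneg (by linarith) htnn) (by linarith)
        nlinarith [hdiff, hnn]
      have hX : (0:ℝ) < t/(30*(1+M)) := by positivity
      have e2 : Real.exp (-(t/(30*(1+M)))) ≤ (l+1)^(l+1) * (t/(30*(1+M)))^(-(l+1)) :=
        exp_neg_le_rpow hkpos hX
      have e3 : (t/(30*(1+M)))^(-(l+1)) = t^(-(l+1)) * (30*(1+M))^(l+1) := by
        rw [Real.div_rpow htnn (by linarith : (0:ℝ) ≤ 30*(1+M)),
          Real.rpow_neg (by linarith : (0:ℝ) ≤ 30*(1+M)), div_inv_eq_mul]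
      have e4 : ((30:ℝ)*(1+M))^(l+1) = 30^(l+1)*(1+M)^(l+1) :=
        Real.mul_rpow (by norm_num) (by linarith)
      have hexpb : Real.exp (-(min 1 M/(3*(1+M)))*t)
          ≤ (l+1)^(l+1) * 30^(l+1) * (1+M)^(l+1) * t^(-(l+1)) := by
        calc Real.exp (-(min 1 M/(3*(1+M)))*t) ≤ Real.exp (-(t/(30*(1+M)))) := e1
          _ ≤ (l+1)^(l+1) * (t/(30*(1+M)))^(-(l+1)) := e2
          _ = (l+1)^(l+1) * 30^(l+1) * (1+M)^(l+1) * t^(-(l+1)) := by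
              rw [e3, e4]; ring
      have hsum_nn : (0:ℝ) ≤ B/M + A := by positivity
      have hrs : (1+M)^(l+1) = (1+M)^l * (1+M) := by
        rw [Real.rpow_add h1M, Real.rpow_one]
      have hBM : (1+M)*(B/M) ≤ 11*B := by
        rw [mul_div_assoc']
        rw [div_le_iff₀ hM]
        nlinarith
      have hfinal_sum : (1+M)^(l+1)*(B/M + A) ≤ (1+M)^(l+1)*A + 11*((1+M)^l*B) := by
        have hpl : (0:ℝ) ≤ (1+M)^l := Real.rpow_nonneg (by linarith) _
        have step : (1+M)^(l+1)*(B/M) ≤ 11*((1+M)^l*B) := by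
          calc (1+M)^(l+1)*(B/M) = (1+M)^l * ((1+M)*(B/M)) := by rw [hrs]; ring
            _ ≤ (1+M)^l * (11*B) := mul_le_mul_of_nonneg_left hBM hpl
            _ = 11*((1+M)^l*B) := by ring
        have expand : (1+M)^(l+1)*(B/M + A) = (1+M)^(l+1)*(B/M) + (1+M)^(l+1)*A := by ring
        linarith
      have hexpb_nn : (0:ℝ) ≤ Real.exp (-(min 1 M/(3*(1+M)))*t) := Real.exp_nonneg _
      calc ‖v t ξ‖^2
          ≤ 3 * Real.exp (-(min 1 M/(3*(1+M)))*t) * (B/M + A) := h3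
        _ ≤ 3 * ((l+1)^(l+1) * 30^(l+1) * (1+M)^(l+1) * t^(-(l+1))) * (B/M + A) := by
            have := mul_le_mul_of_nonneg_right
              (mul_le_mul_of_nonneg_left hexpb (by norm_num : (0:ℝ) ≤ 3)) hsum_nn
            linarith [this]
        _ = KH * ((1+M)^(l+1) * (B/M + A)) := by rw [hKH]; ring
        _ ≤ KH * ((1+M)^(l+1)*A + 11*((1+M)^l*B)) :=
            mul_le_mul_of_nonneg_left hfinal_sum hKHpos.le
        _ = highf ξ := by rw [hhighf]
  have hmono : (∫ ξ, ‖v t ξ‖^2)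
      ≤ ∫ ξ, (S.indicator lowf ξ + Sᶜ.indicator highf ξ) :=
    integral_mono_of_nonneg (Filter.Eventually.of_forall (fun ξ => by positivity))
      (hlowind.add hhighind) hbound
  have hsplit : (∫ ξ, (S.indicator lowf ξ + Sᶜ.indicator highf ξ))
      = (∫ ξ, S.indicator lowf ξ) + ∫ ξ, Sᶜ.indicator highf ξ :=
    integral_add hlowind hhighind
  have hlowval : (∫ ξ, S.indicator lowf ξ) ≤ KL * (π/t)^((n:ℝ)/2) := by
    rw [integral_indicator hSm]
    have h1' : (∫ ξ in S, lowf ξ) ≤ ∫ ξ, lowf ξ :=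
      setIntegral_le_integral hlowint (Filter.Eventually.of_forall (fun ξ => by positivity))
    have h2' : (∫ ξ, lowf ξ) = KL * (π/t)^((n:ℝ)/2) := by
      rw [hlowf, integral_const_mul, integral_gauss ht0]
    linarith
  have hhighval : (∫ ξ, Sᶜ.indicator highf ξ) ≤ KH * (Ysq u₀ (l+1) + 11 * Ysq u₁ l) := by
    rw [integral_indicator hSm.compl]
    have h1' : (∫ ξ in Sᶜ, highf ξ) ≤ ∫ ξ, highf ξ :=
      setIntegral_le_integral hhighint (Filter.Eventually.of_forall hhighf_nonneg)
    have h2' : (∫ ξ, highf ξ) = KH * (Ysq u₀ (l+1) + 11 * Ysq u₁ l) := by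
      rw [hhighf, integral_const_mul,
        integral_add h0Y (h1Y.const_mul 11), integral_const_mul]
      rw [Ysq, Ysq]
    linarith
  have hgb : (π/t)^((n:ℝ)/2) ≤ π^((n:ℝ)/2) * t^(-(l+1)) := by
    rw [Real.div_rpow hπ.le htnn, div_eq_mul_inv, ← Real.rpow_neg htnn]
    exact mul_le_mul_of_nonneg_left
      (Real.rpow_le_rpow_of_exponent_le ht (by linarith)) (Real.rpow_nonneg hπ.le _)
  have hfinal : (∫ ξ, ‖v t ξ‖^2) ≤ C0 * SS * t^(-(l+1)) := by
    have t1 : KL * (π/t)^((n:ℝ)/2) ≤ 21 * SS * (π^((n:ℝ)/2) * t^(-(l+1))) := by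
      have hKLSS : KL ≤ 21 * SS := by
        rw [hKL, hSS]; linarith
      calc KL * (π/t)^((n:ℝ)/2) ≤ KL * (π^((n:ℝ)/2) * t^(-(l+1))) :=
            mul_le_mul_of_nonneg_left hgb hKLnn
        _ ≤ 21 * SS * (π^((n:ℝ)/2) * t^(-(l+1))) :=
            mul_le_mul_of_nonneg_right hKLSS (by positivity)
    have t2 : KH * (Ysq u₀ (l+1) + 11 * Ysq u₁ l)
        ≤ 3 * (l+1)^(l+1) * 30^(l+1) * t^(-(l+1)) * (11 * SS) := by
      have hY : Ysq u₀ (l+1) + 11 * Ysq u₁ l ≤ 11 * SS := by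
        rw [hSS]
        have := sq_nonneg (norm11 u₀); have := sq_nonneg (norm11 u₁)
        linarith
      rw [hKH]
      exact mul_le_mul_of_nonneg_left hY (by positivity)
    calc (∫ ξ, ‖v t ξ‖^2)
        ≤ (∫ ξ, S.indicator lowf ξ) + ∫ ξ, Sᶜ.indicator highf ξ := by
          rw [← hsplit]; exact hmono
      _ ≤ KL * (π/t)^((n:ℝ)/2) + KH * (Ysq u₀ (l+1) + 11 * Ysq u₁ l) :=
          add_le_add hlowval hhighval
      _ ≤ 21 * SS * (π^((n:ℝ)/2) * t^(-(l+1)))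
          + 3 * (l+1)^(l+1) * 30^(l+1) * t^(-(l+1)) * (11 * SS) :=
          add_le_add t1 t2
      _ = C0 * SS * t^(-(l+1)) := by rw [hC0def]; ring
  have hsqrt_t : Real.sqrt (t^(-(l+1))) = t^(-(l+1)/2) := by
    have h2' : (t^(-(l+1)/2))^2 = t^(-(l+1)) := by
      rw [sq, ← Real.rpow_add ht0]; ring_nf
    rw [← h2', Real.sqrt_sq (Real.rpow_nonneg htnn _)]
  have hIsq : Real.sqrt SS = I0 u₀ u₁ l := by rw [hSS, I0]
  calc Real.sqrt (∫ ξ, ‖v t ξ‖^2)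
      ≤ Real.sqrt (C0 * SS * t^(-(l+1))) := Real.sqrt_le_sqrt hfinal
    _ = Real.sqrt C0 * I0 u₀ u₁ l * t^(-(l+1)/2) := by
        rw [Real.sqrt_mul (mul_nonneg hC0.le hSSnn), Real.sqrt_mul hC0.le, hIsq, hsqrt_t]
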